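/- A continued fraction [b₀,b₁,…] with integer coefficients converges if and only if there do not exist two distinct extended rationals u, w ∈ ℚ∞ that each appear infinitely many times in its sequence of convergents (v_n). -/

import Mathlib

open Filter Topology OnePoint

/-- The Möbius map `z ↦ b - 1/z` on the one-point compactification `ℝ∞` of `ℝ`. -/
noncomputable def mob (b : ℤ) (z : OnePoint ℝ) : OnePoint ℝ :=
  Option.elim z ((b : ℝ) : OnePoint ℝ)
    (fun x => if x = 0 then (∞ : OnePoint ℝ) else (((b : ℝ) - 1 / x : ℝ) : OnePoint ℝ))

/-- Value of a finite continued fraction `[b₀, …, b_m]`, i.e. `s₀(s₁(⋯ s_m(∞)))`. -/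
noncomputable def cfVal : List ℤ → OnePoint ℝ
  | [] => ∞
  | b :: t => mob b (cfVal t)

/-- The `n`th convergent `v_n = S_n(∞)` of the continued fraction `[b₀, b₁, …]`. -/
noncomputable def cfConv (b : ℕ → ℤ) (n : ℕ) : OnePoint ℝ :=
  cfVal ((List.range (n + 1)).map b)

/-- `m` is a positive index at which the coefficient is `0`, `1` or `-1`. -/
def badIdx (b : ℕ → ℤ) (m : ℕ) : Prop :=
  1 ≤ m ∧ (b m = 0 ∨ b m = 1 ∨ b m = -1)

instance (b : ℕ → ℤ) : DecidablePred (badIdx b) := fun m => by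
  unfold badIdx; infer_instance

-- The singularization map `Φ` on integer sequences.
open Classical in
noncomputable def Phi (b : ℕ → ℤ) : ℕ → ℤ :=
  if h : ∃ m, badIdx b m then
    let m := Nat.find h
    if b m = 0 then
      fun k => if k + 1 < m then b k
        else if k = m - 1 then b (m - 1) + b (m + 1)
        else b (k + 2)
    else if b m = 1 then
      fun k => if k + 1 < m then b k
        else if k = m - 1 then b (m - 1) - 1
        else if k = m then b (m + 1) - 1
        else b (k + 1)
    else
      fun k => if k + 1 < m then b k
        else if k = m - 1 then b (m - 1) + 1
        else if k = m then b (m + 1) + 1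
        else b (k + 1)
  else b

-- `p(b) ∈ ℕ ∪ {∞}`: the least positive index at which `0`, `1` or `-1` occurs.
open Classical in
noncomputable def pIdx (b : ℕ → ℤ) : ℕ∞ :=
  if h : ∃ m, badIdx b m then (Nat.find h : ℕ∞) else ⊤

/-- `p⁽ⁿ⁾ → ∞` as `n → ∞`. -/
def PTendsToTop (b : ℕ → ℤ) : Prop :=
  ∀ N : ℕ, ∃ M : ℕ, ∀ n ≥ M, (N : ℕ∞) < pIdx (Phi^[n] b)

/-- `p = liminf pⁿ`, as a natural number (junk value if the liminf is `∞`). -/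
noncomputable def pLim (b : ℕ → ℤ) : ℕ :=
  (Filter.liminf (fun n => pIdx (Phi^[n] b)) Filter.atTop).toNat

/-- `q⁽ⁿ⁾ = |b⁽ⁿ⁾_{p-1}|`. -/
noncomputable def qSeq (b : ℕ → ℤ) (n : ℕ) : ℕ :=
  ((Phi^[n] b) (pLim b - 1)).natAbs

/-- Two continued fractions have the same tail. -/
def SameTail (b c : ℕ → ℤ) : Prop := ∃ r s : ℕ, ∀ k : ℕ, b (r + k) = c (s + k)

/-- `bstar` is the limit continued fraction: each coefficient of `Φⁿ(b)` stabilises on it. -/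
def EventuallyCoeff (b bstar : ℕ → ℤ) : Prop :=
  ∀ k : ℕ, ∃ N : ℕ, ∀ n ≥ N, Phi^[n] b k = bstar k

/-- The point of `ℝ∞` represented by the integer fraction `a/b` (`∞` when `b = 0`). -/
noncomputable def intPt (a b : ℤ) : OnePoint ℝ :=
  if b = 0 then ∞ else (((a : ℝ) / (b : ℝ)) : OnePoint ℝ)

/-- Adjacency in the Farey graph: `x = a/b`, `y = c/d` with `ad - bc = ±1`. -/
def FareyAdj (x y : OnePoint ℝ) : Prop :=
  ∃ a b c d : ℤ, x = intPt a b ∧ y = intPt c d ∧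
    (a * d - b * c = 1 ∨ a * d - b * c = -1)

/-- `x` is an extended rational, i.e. a member of `ℚ∞ = ℚ ∪ {∞} ⊆ ℝ∞`. -/
def IsExtRat (x : OnePoint ℝ) : Prop :=
  x = ∞ ∨ ∃ q : ℚ, x = ((q : ℝ) : OnePoint ℝ)

-- One step of the index-tracking sequence, for the current coefficient sequence `c`.
open Classical in
noncomputable def eStep (c : ℕ → ℤ) (e : ℕ) : Option ℕ :=
  if h : ∃ m, badIdx c m then
    let m := Nat.find h
    if c m = 0 then
      if e + 2 ≤ m then Option.some e
      else if e = m - 1 ∨ e = m then (none : Option ℕ)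
      else Option.some (e - 2)
    else
      if e + 2 ≤ m then Option.some e
      else if e = m - 1 then (none : Option ℕ)
      else Option.some (e - 1)
  else Option.some e

/-- The index-tracking sequence `e⁽⁰⁾(k), e⁽¹⁾(k), …` (`none` once it has terminated). -/
noncomputable def eSeq (b : ℕ → ℤ) (k : ℕ) : ℕ → Option ℕ
  | 0 => Option.some k
  | n + 1 => (eSeq b k n).bind (eStep (Phi^[n] b))


-- ===================== auxiliary development =====================
section Aux
open Filter Topology OnePoint Set

noncomputable def Dd : OnePoint ℝ → OnePoint ℝ → ℝ
  | Option.none, Option.none => 0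
  | Option.none, Option.some _ => 1
  | Option.some _, Option.none => -1
  | Option.some s, Option.some t => s - t

noncomputable def Side (x y z : OnePoint ℝ) : ℝ := Dd x z * Dd z y

lemma Dd_eq_zero {x z : OnePoint ℝ} (h : Dd x z = 0) : x = z := by
  cases x with
  | infty => cases z with
    | infty => rfl
    | coe t => simp [Dd] at h
  | coe s => cases z with
    | infty => simp [Dd] at h
    | coe t => simp [Dd, sub_eq_zero] at h; rw [h]

lemma side_eq_zero {x y z : OnePoint ℝ} (h : Side x y z = 0) : z = x ∨ z = y := by
  rcases mul_eq_zero.1 h with h | h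
  · exact Or.inl (Dd_eq_zero h).symm
  · exact Or.inr (Dd_eq_zero h)

lemma isExtRat_intPt (a b : ℤ) : IsExtRat (intPt a b) := by
  unfold intPt
  by_cases hb : b = 0
  · simp [hb, IsExtRat]
  · right
    refine ⟨(a : ℚ) / (b : ℚ), ?_⟩
    have : ((((a:ℚ)/(b:ℚ)) : ℚ) : ℝ) = (a : ℝ) / (b : ℝ) := by push_cast; ring
    simp [hb, this]

/-- Plücker-style: two unimodular pairs can't be linked. -/
lemma noLink (a c b d p q r s : ℤ)
    (h1 : a*d - c*b = 1 ∨ a*d - c*b = -1)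
    (h2 : p*s - q*r = 1 ∨ p*s - q*r = -1) :
    ¬ ((a*q - c*p) * (p*d - q*b)) * ((a*s - c*r) * (r*d - s*b)) < 0 := by
  intro hlt
  set m := (a*q - c*p) * (r*d - s*b) with hm
  set n := (a*s - c*r) * (p*d - q*b) with hn
  have key : m - n = -((a*d - c*b) * (p*s - q*r)) := by rw [hm, hn]; ring
  have hmn : m * n < 0 := by
    have : m * n = ((a*q - c*p) * (p*d - q*b)) * ((a*s - c*r) * (r*d - s*b)) := by
      rw [hm, hn]; ring
    linarith [hlt, this.symm ▸ hlt]
  have h3 : m - n = 1 ∨ m - n = -1 := by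
    rcases h1 with h1 | h1 <;> rcases h2 with h2 | h2 <;> rw [key, h1, h2] <;> simp
  rcases mul_neg_iff.1 hmn with ⟨hm1, hn1⟩ | ⟨hm1, hn1⟩ <;> omega

lemma bridge (a c b d p q : ℤ) (hdet : a*d - c*b ≠ 0) (hz : ¬(p = 0 ∧ q = 0)) :
    Side (intPt a c) (intPt b d) (intPt p q) *
      ((if c = 0 then (a:ℝ) else c) * (if d = 0 then (b:ℝ) else d) * (if q = 0 then (p:ℝ) else q)^2)
    = (((a*q - c*p) * (p*d - q*b) : ℤ) : ℝ) := by
  have hcd : ¬ (c = 0 ∧ d = 0) := by rintro ⟨rfl, rfl⟩; simp at hdet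
  by_cases hq : q = 0 <;> by_cases hc : c = 0 <;> by_cases hd : d = 0 <;>
    simp_all [intPt, Side, Dd]
  all_goals try exact Or.inl trivial
  all_goals try ring
  all_goals
    ((try have hq' : (q:ℝ) ≠ 0 := Int.cast_ne_zero.mpr hq);
     (try have hc' : (c:ℝ) ≠ 0 := Int.cast_ne_zero.mpr hc);
     (try have hd' : (d:ℝ) ≠ 0 := Int.cast_ne_zero.mpr hd);
     (try have ha' : (a:ℝ) ≠ 0 := Int.cast_ne_zero.mpr hdet);
     (try have hb' : (b:ℝ) ≠ 0 := Int.cast_ne_zero.mpr hdet);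
     field_simp <;> ring)

/-- No step of a unimodular pair can jump across a Farey edge. -/
lemma noJump (a c b d p q r s : ℤ)
    (h1 : a*d - c*b = 1 ∨ a*d - c*b = -1)
    (h2 : p*s - q*r = 1 ∨ p*s - q*r = -1)
    (hu : Side (intPt a c) (intPt b d) (intPt p q) > 0)
    (hw : Side (intPt a c) (intPt b d) (intPt r s) < 0) : False := by
  have hdet : a*d - c*b ≠ 0 := by rcases h1 with h | h <;> omega
  have hpq : ¬ (p = 0 ∧ q = 0) := by rintro ⟨rfl, rfl⟩; rcases h2 with h | h <;> omega
  have hrs : ¬ (r = 0 ∧ s = 0) := by rintro ⟨rfl, rfl⟩; rcases h2 with h | h <;> omega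
  set c' : ℝ := if c = 0 then (a:ℝ) else c with hc'
  set d' : ℝ := if d = 0 then (b:ℝ) else d with hd'
  have hc'0 : c' ≠ 0 := by
    rw [hc']; split_ifs with h
    · subst h; simp only [zero_mul, sub_zero] at hdet ⊢
      exact Int.cast_ne_zero.2 (by rintro rfl; simp at hdet)
    · exact Int.cast_ne_zero.2 h
  have hd'0 : d' ≠ 0 := by
    rw [hd']; split_ifs with h
    · subst h; simp only [mul_zero, zero_sub, neg_ne_zero] at hdet ⊢
      exact Int.cast_ne_zero.2 (by rintro rfl; simp at hdet)
    · exact Int.cast_ne_zero.2 h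
  have hq'0 : ((if q = 0 then (p:ℝ) else q)) ≠ 0 := by
    split_ifs with h
    · exact Int.cast_ne_zero.2 (fun hp => hpq ⟨hp, h⟩)
    · exact Int.cast_ne_zero.2 h
  have hs'0 : ((if s = 0 then (r:ℝ) else s)) ≠ 0 := by
    split_ifs with h
    · exact Int.cast_ne_zero.2 (fun hp => hrs ⟨hp, h⟩)
    · exact Int.cast_ne_zero.2 h
  have e1 := bridge a c b d p q hdet hpq
  have e2 := bridge a c b d r s hdet hrs
  rw [← hc', ← hd'] at e1 e2
  have hiu : (0:ℝ) < (((a*q - c*p) * (p*d - q*b) : ℤ) : ℝ) * (c' * d')⁻¹ := by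
    rw [← e1]
    have : Side (intPt a c) (intPt b d) (intPt p q) *
        (c' * d' * (if q = 0 then (p:ℝ) else q) ^ 2) * (c' * d')⁻¹
        = Side (intPt a c) (intPt b d) (intPt p q) * (if q = 0 then (p:ℝ) else q) ^ 2 := by
      field_simp
    rw [this]
    exact mul_pos hu (by positivity)
  have hiw : (((a*s - c*r) * (r*d - s*b) : ℤ) : ℝ) * (c' * d')⁻¹ < 0 := by
    rw [← e2]
    have : Side (intPt a c) (intPt b d) (intPt r s) *
        (c' * d' * (if s = 0 then (r:ℝ) else s) ^ 2) * (c' * d')⁻¹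
        = Side (intPt a c) (intPt b d) (intPt r s) * (if s = 0 then (r:ℝ) else s) ^ 2 := by
      field_simp
    rw [this]
    have h2' : ((if s = 0 then (r:ℝ) else s)) ^ 2 > 0 := by positivity
    nlinarith
  have : (((a*q - c*p) * (p*d - q*b) : ℤ) : ℝ) * (((a*s - c*r) * (r*d - s*b) : ℤ) : ℝ) < 0 := by
    have h3 := mul_neg_of_pos_of_neg hiu hiw
    have hcd2 : ((c' * d')⁻¹) ^ 2 > 0 := by positivity
    nlinarith [h3]
  exact noLink a c b d p q r s h1 h2 (by exact_mod_cast this)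

lemma crossInner (S : ℕ → ℝ)
    (hnj : ∀ n, ¬(S n > 0 ∧ S (n+1) < 0)) :
    ∀ j m, S m > 0 → S (m + j) < 0 → ∃ n, m < n ∧ n ≤ m + j ∧ S n = 0 := by
  intro j
  induction j with
  | zero => intro m h1 h2; simp at h2; linarith
  | succ j ih =>
    intro m h1 h2
    rcases lt_trichotomy (S (m+1)) 0 with h | h | h
    · exact absurd ⟨h1, h⟩ (hnj m)
    · exact ⟨m+1, by omega, by omega, h⟩
    · obtain ⟨n, hn1, hn2, hn3⟩ := ih (m+1) h (by convert h2 using 2; omega)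
      exact ⟨n, by omega, by omega, hn3⟩

lemma crossing (S : ℕ → ℝ)
    (hnj : ∀ n, ¬(S n > 0 ∧ S (n+1) < 0) ∧ ¬(S n < 0 ∧ S (n+1) > 0))
    (h1 : ∃ᶠ n in atTop, S n > 0) (h2 : ∃ᶠ n in atTop, S n < 0) :
    ∃ᶠ n in atTop, S n = 0 := by
  rw [frequently_atTop]
  intro N
  obtain ⟨m, hm, hm2⟩ := (frequently_atTop.1 h1) N
  obtain ⟨k, hk, hk2⟩ := (frequently_atTop.1 h2) m
  obtain ⟨n, hn1, hn2, hn3⟩ := crossInner S (fun n => (hnj n).1) (k - m) m hm2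
    (by convert hk2 using 2; omega)
  exact ⟨n, by omega, hn3⟩

def matL : List ℤ → ℤ × ℤ × ℤ × ℤ
  | [] => (1, 0, 0, 1)
  | t :: l => (t * (matL l).1 - (matL l).2.2.1, t * (matL l).2.1 - (matL l).2.2.2,
      (matL l).1, (matL l).2.1)

lemma matL_det : ∀ l : List ℤ,
    (matL l).1 * (matL l).2.2.2 - (matL l).2.1 * (matL l).2.2.1 = 1 := by
  intro l
  induction l with
  | nil => simp [matL]
  | cons t l ih => simp only [matL]; ring_nf; ring_nf at ih; linarith

lemma matL_append_single (t : ℤ) : ∀ l : List ℤ,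
    matL (l ++ [t]) = ((matL l).1 * t + (matL l).2.1, -(matL l).1,
      (matL l).2.2.1 * t + (matL l).2.2.2, -(matL l).2.2.1) := by
  intro l
  induction l with
  | nil => simp [matL]
  | cons s l ih =>
    show matL (s :: (l ++ [t])) = _
    simp only [matL, ih]
    refine Prod.ext ?_ (Prod.ext ?_ (Prod.ext ?_ ?_)) <;> dsimp <;> ring

lemma mobIntPt (t A C : ℤ) (h : ¬(A = 0 ∧ C = 0)) :
    mob t (intPt A C) = intPt (t * A - C) A := by
  by_cases hC : C = 0
  · have hA : A ≠ 0 := fun hA => h ⟨hA, hC⟩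
    have hA' : (A:ℝ) ≠ 0 := Int.cast_ne_zero.2 hA
    simp only [intPt, hC, if_pos rfl, if_neg hA, mob]
    show ((t:ℝ) : OnePoint ℝ) = _
    congr 1
    push_cast
    field_simp
    ring
  · by_cases hA : A = 0
    · have hC' : (C:ℝ) ≠ 0 := Int.cast_ne_zero.2 hC
      simp [intPt, hC, hA, mob, hC', Option.elim]
    · have hA' : (A:ℝ) ≠ 0 := Int.cast_ne_zero.2 hA
      have hC' : (C:ℝ) ≠ 0 := Int.cast_ne_zero.2 hC
      have hAC : (A:ℝ)/(C:ℝ) ≠ 0 := div_ne_zero hA' hC'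
      simp only [intPt, if_neg hC, if_neg hA, mob, Option.elim, if_neg hAC]
      congr 1
      push_cast
      field_simp

def Aseq (b : ℕ → ℤ) (n : ℕ) : ℤ := (matL ((List.range (n+1)).map b)).1
def Cseq (b : ℕ → ℤ) (n : ℕ) : ℤ := (matL ((List.range (n+1)).map b)).2.2.1

lemma matL_not_both_zero (l : List ℤ) : ¬((matL l).1 = 0 ∧ (matL l).2.2.1 = 0) := by
  rintro ⟨h1, h2⟩
  have := matL_det l
  rw [h1, h2] at this
  simp at this

lemma cfVal_eq : ∀ l : List ℤ, cfVal l = intPt (matL l).1 (matL l).2.2.1 := by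
  intro l
  induction l with
  | nil => simp [cfVal, matL, intPt]
  | cons t l ih =>
    show mob t (cfVal l) = _
    rw [ih, mobIntPt t _ _ (matL_not_both_zero l)]
    rfl

lemma cfConv_eq (b : ℕ → ℤ) (n : ℕ) : cfConv b n = intPt (Aseq b n) (Cseq b n) :=
  cfVal_eq _

lemma matL_succ (b : ℕ → ℤ) (n : ℕ) :
    matL ((List.range (n+2)).map b)
      = ((matL ((List.range (n+1)).map b)).1 * b (n+1) + (matL ((List.range (n+1)).map b)).2.1,
         -(matL ((List.range (n+1)).map b)).1,
         (matL ((List.range (n+1)).map b)).2.2.1 * b (n+1) + (matL ((List.range (n+1)).map b)).2.2.2,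
         -(matL ((List.range (n+1)).map b)).2.2.1) := by
  rw [List.range_succ, List.map_append, List.map_singleton, matL_append_single]

lemma adjDet (b : ℕ → ℤ) (n : ℕ) :
    Aseq b n * Cseq b (n+1) - Cseq b n * Aseq b (n+1) = 1 := by
  unfold Aseq Cseq
  rw [matL_succ]
  have := matL_det ((List.range (n+1)).map b)
  dsimp only
  linear_combination this

lemma AC_ne_zero (b : ℕ → ℤ) (n : ℕ) : ¬(Aseq b n = 0 ∧ Cseq b n = 0) :=
  matL_not_both_zero _

lemma exists_two_clusterPts {v : ℕ → OnePoint ℝ} (h : ¬ ∃ L, Tendsto v atTop (𝓝 L)) :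
    ∃ α β : OnePoint ℝ, α ≠ β ∧ MapClusterPt α atTop v ∧ MapClusterPt β atTop v := by
  have hne : (Filter.map v atTop).NeBot := map_neBot
  obtain ⟨α, -, hα⟩ := isCompact_univ.exists_clusterPt (f := Filter.map v atTop)
    (by simp [principal_univ])
  have hnt : ¬ Tendsto v atTop (𝓝 α) := fun ht => h ⟨α, ht⟩
  obtain ⟨s, hs, hns⟩ : ∃ s ∈ 𝓝 α, ¬ ∀ᶠ n in atTop, v n ∈ s := by
    by_contra hc
    push_neg at hc
    exact hnt (fun s hs => hc s hs)
  set U := interior s with hU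
  have hUopen : IsOpen U := isOpen_interior
  have hαU : α ∈ U := mem_interior_iff_mem_nhds.2 hs
  have hfreq : ∃ᶠ n in atTop, v n ∈ Uᶜ := by
    have h1 : ¬ ∀ᶠ n in atTop, v n ∈ U := fun he => hns (he.mono fun n hn => interior_subset hn)
    exact (Filter.not_eventually.1 h1).mono fun n hn => hn
  have hneb : (Filter.map v atTop ⊓ 𝓟 Uᶜ).NeBot := by
    have : ∃ᶠ z in Filter.map v atTop, z ∈ Uᶜ := by rwa [frequently_map]
    exact (frequently_iff_neBot (p := fun z => z ∈ Uᶜ)).1 this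
  obtain ⟨β, -, hβ⟩ := isCompact_univ.exists_clusterPt (f := Filter.map v atTop ⊓ 𝓟 Uᶜ)
    (by simp [principal_univ])
  have hβv : MapClusterPt β atTop v := hβ.mono inf_le_left
  have hβU : β ∈ Uᶜ := by
    have := hβ.mono inf_le_right
    have hcl : β ∈ closure Uᶜ := mem_closure_iff_clusterPt.2 this
    rwa [hUopen.isClosed_compl.closure_eq] at hcl
  exact ⟨α, β, fun hab => hβU (hab ▸ hαU), hα, hβv⟩

lemma sternBrocot (g : ℝ) (hirr : ¬ ∃ r : ℚ, g = (r : ℝ)) {ε : ℝ} (hε : 0 < ε) :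
    ∃ a c b d : ℤ, 0 < c ∧ 0 < d ∧ a * d - c * b = -1 ∧
      (a:ℝ)/c < g ∧ g < (b:ℝ)/d ∧ (b:ℝ)/d - (a:ℝ)/c < ε := by
  have hirr' : ∀ (p q : ℤ), 0 < q → g ≠ (p:ℝ)/(q:ℝ) := by
    intro p q hq he
    exact hirr ⟨(p:ℚ)/(q:ℚ), by rw [he]; push_cast; ring⟩
  have main : ∀ n : ℕ, ∃ a c b d : ℤ, 0 < c ∧ 0 < d ∧ a * d - c * b = -1 ∧
      (a:ℝ)/c < g ∧ g < (b:ℝ)/d ∧ (n:ℤ) ≤ c * d := by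
    intro n
    induction n with
    | zero =>
      refine ⟨⌊g⌋, 1, ⌊g⌋ + 1, 1, one_pos, one_pos, by ring, ?_, ?_, by norm_num⟩
      · push_cast
        rw [div_one]
        exact lt_of_le_of_ne (Int.floor_le g)
          (fun he => hirr' ⌊g⌋ 1 one_pos (by rw [← he]; norm_num))
      · push_cast
        rw [div_one]
        exact Int.lt_floor_add_one g
    | succ n ih =>
      obtain ⟨a, c, b, d, hc, hd, hdet, hl, hr, hsz⟩ := ih
      rcases lt_or_gt_of_ne (hirr' (a + b) (c + d) (by omega) ·) with hlt | hgt
      · refine ⟨a, c, a + b, c + d, hc, by omega, by linear_combination hdet, hl,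
          by push_cast at hlt ⊢; exact hlt, ?_⟩
        push_cast
        nlinarith [hsz, hc, hd, mul_pos hc hc]
      · refine ⟨a + b, c + d, b, d, by omega, hd, by linear_combination hdet,
          by push_cast at hgt ⊢; exact hgt, hr, ?_⟩
        push_cast
        nlinarith [hsz, hc, hd, mul_pos hd hd]
  obtain ⟨n, hn⟩ := exists_nat_gt (1/ε)
  obtain ⟨a, c, b, d, hc, hd, hdet, hl, hr, hsz⟩ := main (n + 1)
  refine ⟨a, c, b, d, hc, hd, hdet, hl, hr, ?_⟩
  have hc' : (0:ℝ) < (c:ℝ) := by exact_mod_cast hc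
  have hd' : (0:ℝ) < (d:ℝ) := by exact_mod_cast hd
  have hcb : (b:ℝ)*(c:ℝ) - (d:ℝ)*(a:ℝ) = 1 := by
    have h0 : b*c - d*a = (1:ℤ) := by linear_combination -hdet
    exact_mod_cast congrArg (Int.cast : ℤ → ℝ) h0
  have hlen : (b:ℝ)/d - (a:ℝ)/c = 1 / ((c:ℝ)*(d:ℝ)) := by
    rw [div_sub_div _ _ (ne_of_gt hd') (ne_of_gt hc'), hcb, mul_comm]
  rw [hlen]
  have hcdn : (n:ℝ) + 1 ≤ (c:ℝ)*(d:ℝ) := by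
    exact_mod_cast hsz
  have hn0 : (0:ℝ) < (n:ℝ) + 1 := by positivity
  have h2 : 1 / ((c:ℝ)*(d:ℝ)) ≤ 1 / ((n:ℝ)+1) := one_div_le_one_div_of_le hn0 hcdn
  have h3 : 1 < ε * ((n:ℝ)) := by rw [div_lt_iff₀ hε] at hn; linarith
  have h4 : 1 / ((n:ℝ)+1) < ε := by
    rw [div_lt_iff₀ hn0]
    nlinarith
  linarith

lemma ratNeighbor (g : ℚ) (e : ℤ) (he : e = 1 ∨ e = -1) (S : ℤ) :
    ∃ r s : ℤ, S < s ∧ g.num * s - (g.den:ℤ) * r = e ∧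
      ((r:ℝ)/(s:ℝ) - (g:ℝ)) = -(e:ℝ)/((s:ℝ)*(g.den:ℝ)) := by
  have hden : 0 < (g.den:ℤ) := by exact_mod_cast g.pos
  have hcop : IsCoprime (g.num) (g.den : ℤ) := by
    rw [Int.isCoprime_iff_gcd_eq_one]
    exact g.reduced
  obtain ⟨u, w, huw⟩ := hcop
  -- u * num + w * den = 1
  set t : ℤ := |e * u| + |S| + 1 with ht
  refine ⟨-e * w + t * g.num, e * u + t * g.den, ?_, by push_cast; ring_nf; linear_combination e * huw, ?_⟩
  · have h1 : t * g.den ≥ t := le_mul_of_one_le_right (by positivity) hden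
    have habs : |e*u| ≥ -(e*u) := neg_le_abs _
    have h2 : |S| ≥ S := le_abs_self S
    have h3 : |S| ≥ 0 := abs_nonneg S
    omega
  · set s := e * u + t * g.den with hs
    have hspos : 0 < s := by
      have h1 : t * g.den ≥ t := le_mul_of_one_le_right (by positivity) hden
      have habs : |e*u| ≥ -(e*u) := neg_le_abs _
      have h2 : |S| ≥ S := le_abs_self S
      have h3 : |S| ≥ 0 := abs_nonneg S
      omega
    have hdet : g.num * s - (g.den:ℤ) * (-e * w + t * g.num) = e := by
      push_cast; ring_nf; linear_combination e * huw
    have hs' : ((s:ℤ):ℝ) ≠ 0 := by exact_mod_cast ne_of_gt hspos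
    have hden' : ((g.den:ℤ):ℝ) ≠ 0 := by exact_mod_cast ne_of_gt hden
    have hg : (g:ℝ) = (g.num:ℝ) / ((g.den:ℤ):ℝ) := by
      rw [Rat.cast_def]; norm_cast
    have hdet' : ((g.num:ℝ)) * (s:ℝ) - ((g.den:ℤ):ℝ) * ((-e * w + t * g.num : ℤ):ℝ) = (e:ℝ) := by
      exact_mod_cast congrArg (Int.cast : ℤ → ℝ) hdet
    rw [hg]
    field_simp
    push_cast at hdet' ⊢
    linear_combination (-(g.den:ℝ)) * hdet'

lemma side_coe_coe (a c b d : ℤ) (hc : c ≠ 0) (hd : d ≠ 0) (t : ℝ) :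
    Side (intPt a c) (intPt b d) ((t : ℝ) : OnePoint ℝ) = ((a:ℝ)/c - t) * (t - (b:ℝ)/d) := by
  simp only [intPt, if_neg hc, if_neg hd]; rfl

lemma side_coe_infty (a c b d : ℤ) (hc : c ≠ 0) (hd : d ≠ 0) :
    Side (intPt a c) (intPt b d) ∞ = -1 := by
  simp only [intPt, if_neg hc, if_neg hd]
  show (-1 : ℝ) * 1 = -1
  norm_num

lemma intPt_coe (m : ℤ) : intPt m 1 = (((m:ℝ)) : OnePoint ℝ) := by
  simp [intPt]

lemma intPt_infty (a : ℤ) : intPt a 0 = ∞ := by simp [intPt]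

lemma side_int_infty (m : ℤ) (t : ℝ) :
    Side (intPt m 1) (intPt 1 0) ((t : ℝ) : OnePoint ℝ) = ((m:ℝ) - t) * (-1) := by
  rw [intPt_coe, intPt_infty]
  rfl

lemma side_infty_int (m : ℤ) (t : ℝ) :
    Side (intPt 1 0) (intPt m 1) ((t : ℝ) : OnePoint ℝ) = 1 * (t - (m:ℝ)) := by
  rw [intPt_coe, intPt_infty]
  rfl

lemma intPt_ratCast (g : ℚ) : intPt g.num (g.den : ℤ) = (((g:ℝ)) : OnePoint ℝ) := by
  have hden : (g.den : ℤ) ≠ 0 := by exact_mod_cast g.den_nz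
  simp only [intPt, if_neg hden]
  congr 1
  rw [Rat.cast_def]
  norm_cast

lemma nhds_real_aux (V : Set (OnePoint ℝ)) (hV : IsOpen V) (g : ℝ)
    (hg : ((g:ℝ) : OnePoint ℝ) ∈ V) :
    ∃ ε > 0, ∀ t : ℝ, |t - g| < ε → ((t:ℝ) : OnePoint ℝ) ∈ V := by
  have h1 : IsOpen ((fun t : ℝ => ((t:ℝ) : OnePoint ℝ)) ⁻¹' V) := hV.preimage OnePoint.continuous_coe
  rw [Metric.isOpen_iff] at h1
  obtain ⟨ε, hε, hball⟩ := h1 g hg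
  exact ⟨ε, hε, fun t ht => hball (by rwa [Metric.mem_ball, Real.dist_eq])⟩

lemma nhds_infty_aux (V : Set (OnePoint ℝ)) (hV : IsOpen V) (hg : ∞ ∈ V) :
    ∃ R : ℝ, 0 ≤ R ∧ ∀ t : ℝ, R < |t| → ((t:ℝ) : OnePoint ℝ) ∈ V := by
  have h1 := (OnePoint.isOpen_iff_of_mem' hg).1 hV
  have hb := h1.1.isBounded
  obtain ⟨r, hr⟩ := hb.subset_closedBall 0
  refine ⟨max r 0, le_max_right _ _, fun t ht => ?_⟩
  by_contra hmem
  have : t ∈ ((fun x : ℝ => ((x:ℝ) : OnePoint ℝ)) ⁻¹' V)ᶜ := hmem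
  have := hr this
  rw [Metric.mem_closedBall, Real.dist_eq, sub_zero] at this
  have := le_trans this (le_max_left r 0)
  linarith [lt_of_le_of_lt this ht]

lemma edgeCross (b : ℕ → ℤ) (a c e d : ℤ)
    (hdet : a*d - c*e = 1 ∨ a*d - c*e = -1)
    (h1 : ∃ᶠ n in atTop, Side (intPt a c) (intPt e d) (cfConv b n) > 0)
    (h2 : ∃ᶠ n in atTop, Side (intPt a c) (intPt e d) (cfConv b n) < 0) :
    (∃ᶠ n in atTop, cfConv b n = intPt a c) ∨ (∃ᶠ n in atTop, cfConv b n = intPt e d) := by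
  set S : ℕ → ℝ := fun n => Side (intPt a c) (intPt e d) (cfConv b n) with hS
  have hconv : ∀ n, cfConv b n = intPt (Aseq b n) (Cseq b n) := cfConv_eq b
  have hnj : ∀ n, ¬(S n > 0 ∧ S (n+1) < 0) ∧ ¬(S n < 0 ∧ S (n+1) > 0) := by
    intro n
    constructor
    · rintro ⟨hp, hm⟩
      rw [hS] at hp hm
      simp only [hconv] at hp hm
      exact noJump a c e d (Aseq b n) (Cseq b n) (Aseq b (n+1)) (Cseq b (n+1)) hdet
        (Or.inl (adjDet b n)) hp hm
    · rintro ⟨hm, hp⟩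
      rw [hS] at hp hm
      simp only [hconv] at hp hm
      exact noJump a c e d (Aseq b (n+1)) (Cseq b (n+1)) (Aseq b n) (Cseq b n) hdet
        (Or.inr (by linear_combination - adjDet b n)) hp hm
  have h0 := crossing S hnj h1 h2
  have h3 : ∃ᶠ n in atTop, (cfConv b n = intPt a c ∨ cfConv b n = intPt e d) :=
    h0.mono (fun n hn => side_eq_zero hn)
  exact frequently_or_distrib.1 h3

lemma infty_trichotomy {v : ℕ → OnePoint ℝ} (hγ : MapClusterPt ∞ atTop v)
    (hev : ∀ᶠ n in atTop, v n ≠ ∞) :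
    (∀ M : ℝ, ∃ᶠ n in atTop, ∃ t : ℝ, v n = ((t:ℝ) : OnePoint ℝ) ∧ M < t) ∨
    (∀ M : ℝ, ∃ᶠ n in atTop, ∃ t : ℝ, v n = ((t:ℝ) : OnePoint ℝ) ∧ t < M) := by
  by_contra hc
  push_neg at hc
  obtain ⟨⟨M1, hM1⟩, ⟨M2, hM2⟩⟩ := hc
  replace hM1 : ∀ᶠ n in atTop, ¬ ∃ t : ℝ, v n = ((t:ℝ) : OnePoint ℝ) ∧ M1 < t :=
    hM1.mono fun n hn ⟨t, h1, h2⟩ => absurd (hn t h1) (not_le.2 h2)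
  replace hM2 : ∀ᶠ n in atTop, ¬ ∃ t : ℝ, v n = ((t:ℝ) : OnePoint ℝ) ∧ t < M2 :=
    hM2.mono fun n hn ⟨t, h1, h2⟩ => absurd (hn t h1) (not_le.2 h2)
  set W : Set (OnePoint ℝ) := ((fun x : ℝ => ((x:ℝ) : OnePoint ℝ)) '' (Icc (min M2 M1) (max M2 M1)))ᶜ with hW
  have hWopen : IsOpen W := isOpen_compl_iff.2 (OnePoint.isClosed_image_coe.2 ⟨isClosed_Icc, isCompact_Icc⟩)
  have hWinf : (∞ : OnePoint ℝ) ∈ W := OnePoint.infty_notMem_image_coe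
  have hfreq : ∃ᶠ n in atTop, v n ∈ W := mapClusterPt_iff_frequently.1 hγ W (hWopen.mem_nhds hWinf)
  obtain ⟨n, hn1, hn2, hn3, hn4⟩ := (hfreq.and_eventually (hM1.and (hM2.and hev))).exists
  cases hvn : v n with
  | infty => exact hn4 hvn
  | coe t =>
    apply hn1
    refine ⟨t, ?_, hvn.symm⟩
    constructor
    · rcases le_or_gt M2 t with h | h
      · exact le_trans (min_le_left _ _) h
      · exact absurd ⟨t, hvn, h⟩ hn3
    · rcases le_or_gt t M1 with h | h
      · exact le_trans h (le_max_right _ _)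
      · exact absurd ⟨t, hvn, h⟩ hn2

lemma real_trichotomy {v : ℕ → OnePoint ℝ} (g : ℝ) (hγ : MapClusterPt ((g:ℝ) : OnePoint ℝ) atTop v)
    (hev : ∀ᶠ n in atTop, v n ≠ ((g:ℝ) : OnePoint ℝ)) :
    (∀ ε : ℝ, 0 < ε → ∃ᶠ n in atTop, ∃ t : ℝ, v n = ((t:ℝ) : OnePoint ℝ) ∧ g < t ∧ t < g + ε) ∨
    (∀ ε : ℝ, 0 < ε → ∃ᶠ n in atTop, ∃ t : ℝ, v n = ((t:ℝ) : OnePoint ℝ) ∧ g - ε < t ∧ t < g) := by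
  by_contra hc
  push_neg at hc
  obtain ⟨⟨ε1, hε1, hM1⟩, ⟨ε2, hε2, hM2⟩⟩ := hc
  replace hM1 : ∀ᶠ n in atTop, ¬ ∃ t : ℝ, v n = ((t:ℝ) : OnePoint ℝ) ∧ g < t ∧ t < g + ε1 :=
    hM1.mono fun n hn ⟨t, h1, h2, h3⟩ => absurd (hn t h1 h2) (not_le.2 h3)
  replace hM2 : ∀ᶠ n in atTop, ¬ ∃ t : ℝ, v n = ((t:ℝ) : OnePoint ℝ) ∧ g - ε2 < t ∧ t < g :=
    hM2.mono fun n hn ⟨t, h1, h2, h3⟩ => absurd (hn t h1 h2) (not_le.2 h3)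
  set ε : ℝ := min ε1 ε2 with hε
  have hεpos : 0 < ε := lt_min hε1 hε2
  set W : Set (OnePoint ℝ) := (fun x : ℝ => ((x:ℝ) : OnePoint ℝ)) '' (Ioo (g - ε) (g + ε)) with hW
  have hWopen : IsOpen W := OnePoint.isOpen_image_coe.2 isOpen_Ioo
  have hWg : ((g:ℝ) : OnePoint ℝ) ∈ W := ⟨g, by constructor <;> [linarith; linarith], rfl⟩
  have hfreq : ∃ᶠ n in atTop, v n ∈ W := mapClusterPt_iff_frequently.1 hγ W (hWopen.mem_nhds hWg)
  obtain ⟨n, hn1, hn2, hn3, hn4⟩ := (hfreq.and_eventually (hM1.and (hM2.and hev))).exists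
  obtain ⟨t, ht, hvt⟩ := hn1
  have h5 : ¬ g < t := fun h => hn2 ⟨t, hvt.symm, h, by have := ht.2; have : ε ≤ ε1 := min_le_left _ _; linarith⟩
  have h6 : ¬ t < g := fun h => hn3 ⟨t, hvt.symm, by have := ht.1; have : ε ≤ ε2 := min_le_right _ _; linarith, h⟩
  have : t = g := le_antisymm (not_lt.1 h5) (not_lt.1 h6)
  exact hn4 (by rw [← hvt, this])

lemma halfBarrier (b : ℕ → ℤ) (γ δ : OnePoint ℝ)
    (hγ : MapClusterPt γ atTop (cfConv b)) (hδ : MapClusterPt δ atTop (cfConv b))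
    (hne : γ ≠ δ) (V : Set (OnePoint ℝ)) (hV : IsOpen V) (hγV : γ ∈ V) :
    ∃ u, u ∈ V ∧ IsExtRat u ∧ {n | cfConv b n = u}.Infinite := by
  have mk : ∀ u : OnePoint ℝ, u ∈ V → (∃ᶠ n in atTop, cfConv b n = u) →
      ∃ u, u ∈ V ∧ IsExtRat u ∧ {n | cfConv b n = u}.Infinite := by
    intro u huV hufreq
    refine ⟨u, huV, ?_, Nat.frequently_atTop_iff_infinite.1 hufreq⟩
    obtain ⟨n, hn⟩ := hufreq.exists
    rw [← hn, cfConv_eq]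
    exact isExtRat_intPt _ _
  by_cases hfreq : ∃ᶠ n in atTop, cfConv b n = γ
  · exact mk γ hγV hfreq
  have hev : ∀ᶠ n in atTop, cfConv b n ≠ γ := not_frequently.1 hfreq
  cases γ with
  | infty =>
    obtain ⟨R, hR0, hRV⟩ := nhds_infty_aux V hV hγV
    cases δ with
    | infty => exact absurd rfl hne
    | coe e =>
      rcases infty_trichotomy hγ hev with hplus | hminus
      · obtain ⟨m, hm⟩ := exists_int_gt (max R e)
        have hmR : R < (m:ℝ) := lt_of_le_of_lt (le_max_left _ _) hm
        have hme : e < (m:ℝ) := lt_of_le_of_lt (le_max_right _ _) hm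
        have h1 : ∃ᶠ n in atTop, Side (intPt m 1) (intPt 1 0) (cfConv b n) > 0 := by
          refine (hplus (m:ℝ)).mono ?_
          rintro n ⟨t, hvt, hmt⟩
          rw [hvt, side_int_infty]
          nlinarith
        have h2 : ∃ᶠ n in atTop, Side (intPt m 1) (intPt 1 0) (cfConv b n) < 0 := by
          have hW : IsOpen ((fun x : ℝ => ((x:ℝ) : OnePoint ℝ)) '' (Iio (m:ℝ))) :=
            OnePoint.isOpen_image_coe.2 isOpen_Iio
          have hfr := mapClusterPt_iff_frequently.1 hδ _ (hW.mem_nhds ⟨e, hme, rfl⟩)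
          refine hfr.mono ?_
          rintro n ⟨t, ht, hvt⟩
          rw [← hvt, side_int_infty]
          nlinarith [mem_Iio.1 ht]
        rcases edgeCross b m 1 1 0 (Or.inr (by ring)) h1 h2 with hx | hy
        · refine mk _ ?_ hx
          rw [intPt_coe]
          exact hRV m (by rw [abs_of_pos (by linarith)]; exact hmR)
        · rw [intPt_infty] at hy
          exact absurd hy hfreq
      · obtain ⟨m, hm⟩ := exists_int_lt (min (-R) e)
        have hmR : (m:ℝ) < -R := lt_of_lt_of_le hm (min_le_left _ _)
        have hme : (m:ℝ) < e := lt_of_lt_of_le hm (min_le_right _ _)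
        have h1 : ∃ᶠ n in atTop, Side (intPt 1 0) (intPt m 1) (cfConv b n) > 0 := by
          have hW : IsOpen ((fun x : ℝ => ((x:ℝ) : OnePoint ℝ)) '' (Ioi (m:ℝ))) :=
            OnePoint.isOpen_image_coe.2 isOpen_Ioi
          have hfr := mapClusterPt_iff_frequently.1 hδ _ (hW.mem_nhds ⟨e, hme, rfl⟩)
          refine hfr.mono ?_
          rintro n ⟨t, ht, hvt⟩
          rw [← hvt, side_infty_int]
          nlinarith [mem_Ioi.1 ht]
        have h2 : ∃ᶠ n in atTop, Side (intPt 1 0) (intPt m 1) (cfConv b n) < 0 := by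
          refine (hminus (m:ℝ)).mono ?_
          rintro n ⟨t, hvt, hmt⟩
          rw [hvt, side_infty_int]
          nlinarith
        rcases edgeCross b 1 0 m 1 (Or.inl (by ring)) h1 h2 with hx | hy
        · rw [intPt_infty] at hx
          exact absurd hx hfreq
        · refine mk _ ?_ hy
          rw [intPt_coe]
          refine hRV m ?_
          rw [abs_of_neg (by linarith)]
          linarith
  | coe g =>
    obtain ⟨εV, hεV, hεVmem⟩ := nhds_real_aux V hV g hγV
    obtain ⟨ε₀, hε₀pos, hε₀V, hε₀δ⟩ : ∃ ε₀ : ℝ, 0 < ε₀ ∧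
        (∀ t : ℝ, |t - g| ≤ ε₀ → ((t:ℝ) : OnePoint ℝ) ∈ V) ∧
        (∀ t : ℝ, |t - g| ≤ ε₀ → ((t:ℝ) : OnePoint ℝ) ≠ δ) := by
      cases δ with
      | infty =>
        exact ⟨εV/2, by linarith, fun t ht => hεVmem t (by linarith),
          fun t ht h => OnePoint.coe_ne_infty t h⟩
      | coe e =>
        have hge : g ≠ e := fun h => hne (by rw [h])
        have habs : 0 < |e - g| := by
          rw [abs_pos, sub_ne_zero]
          exact fun h => hge h.symm
        refine ⟨min (εV/2) (|e - g|/2), by positivity,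
          fun t ht => hεVmem t (lt_of_le_of_lt (le_trans ht (min_le_left _ _)) (by linarith)),
          fun t ht h => ?_⟩
        have : t = e := OnePoint.coe_injective h
        subst this
        have := le_trans ht (min_le_right _ _)
        linarith
    -- helper for the δ side
    have deltaSide : ∀ x y : ℝ, x ≤ g → g ≤ y → y - x ≤ ε₀ →
        ∃ᶠ n in atTop, (cfConv b n = ∞ ∨ ∃ t : ℝ, cfConv b n = ((t:ℝ) : OnePoint ℝ) ∧ (t < x ∨ y < t)) := by
      intro x y hx hy hxy
      set W : Set (OnePoint ℝ) := ((fun s : ℝ => ((s:ℝ) : OnePoint ℝ)) '' (Icc x y))ᶜ with hWdef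
      have hWopen : IsOpen W := isOpen_compl_iff.2 (OnePoint.isClosed_image_coe.2 ⟨isClosed_Icc, isCompact_Icc⟩)
      have hδW : δ ∈ W := by
        intro hmem
        obtain ⟨t, ht, hteq⟩ := hmem
        refine hε₀δ t ?_ hteq
        rw [abs_le]
        constructor <;> [linarith [ht.1]; linarith [ht.2]]
      have hfr := mapClusterPt_iff_frequently.1 hδ _ (hWopen.mem_nhds hδW)
      refine hfr.mono ?_
      intro n hn
      cases hvn : cfConv b n with
      | infty => exact Or.inl rfl
      | coe t =>
        refine Or.inr ⟨t, rfl, ?_⟩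
        rw [hvn] at hn
        by_contra hcon
        push_neg at hcon
        exact hn ⟨t, ⟨hcon.1, hcon.2⟩, rfl⟩
    by_cases hrat : ∃ r : ℚ, g = (r:ℝ)
    · obtain ⟨r, rfl⟩ := hrat
      have hden : (0:ℤ) < (r.den:ℤ) := by exact_mod_cast r.pos
      have hden0 : (r.den:ℤ) ≠ 0 := ne_of_gt hden
      have hdenR : (0:ℝ) < ((r.den:ℤ):ℝ) := by exact_mod_cast hden
      have hgnum : ((r:ℚ):ℝ) = (r.num:ℝ)/((r.den:ℤ):ℝ) := by rw [Rat.cast_def]; norm_cast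
      have hceil0 : (0:ℤ) ≤ ⌈1/ε₀⌉ := Int.ceil_nonneg (by positivity)
      rcases real_trichotomy ((r:ℚ):ℝ) hγ hev with hside | hside
      · obtain ⟨rr, ss, hSs, hdet2, heq⟩ := ratNeighbor r (-1) (Or.inr rfl) (⌈1/ε₀⌉ + 1)
        have hss : (0:ℤ) < ss := by omega
        have hss0 : ss ≠ 0 := ne_of_gt hss
        have hssR : (1:ℝ)/ε₀ < (ss:ℝ) := by
          calc (1:ℝ)/ε₀ ≤ (⌈1/ε₀⌉:ℝ) := Int.le_ceil _
            _ < (ss:ℝ) := by exact_mod_cast (by omega : ⌈1/ε₀⌉ < ss)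
        have hssR0 : (0:ℝ) < (ss:ℝ) := by exact_mod_cast hss
        set yR : ℝ := (rr:ℝ)/(ss:ℝ) with hyR
        have hgap : yR - ((r:ℚ):ℝ) = 1/((ss:ℝ)*((r.den:ℤ):ℝ)) := by
          rw [hyR, heq]; push_cast; ring
        have hgappos : 0 < yR - ((r:ℚ):ℝ) := by rw [hgap]; positivity
        have hgapeps : yR - ((r:ℚ):ℝ) ≤ ε₀ := by
          rw [hgap]
          have hd1 : (1:ℝ) ≤ ((r.den:ℤ):ℝ) := by exact_mod_cast hden
          have h1s : 1/((ss:ℝ)*((r.den:ℤ):ℝ)) ≤ 1/(ss:ℝ) := by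
            apply one_div_le_one_div_of_le hssR0
            nlinarith
          have h2s : 1/(ss:ℝ) < ε₀ := by
            rw [div_lt_iff₀ hssR0]
            rw [div_lt_iff₀ hε₀pos] at hssR
            nlinarith
          linarith
        have h1 : ∃ᶠ n in atTop, Side (intPt r.num (r.den:ℤ)) (intPt rr ss) (cfConv b n) > 0 := by
          refine (hside _ hgappos).mono ?_
          rintro n ⟨t, hvt, ht1, ht2⟩
          rw [hvt, side_coe_coe _ _ _ _ hden0 hss0, ← hgnum]
          have : t < yR := by linarith
          nlinarith
        have h2 : ∃ᶠ n in atTop, Side (intPt r.num (r.den:ℤ)) (intPt rr ss) (cfConv b n) < 0 := by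
          refine (deltaSide ((r:ℚ):ℝ) yR le_rfl (le_of_lt (by linarith)) (by linarith)).mono ?_
          rintro n (hn | ⟨t, hvt, hts⟩)
          · rw [hn, side_coe_infty _ _ _ _ hden0 hss0]; norm_num
          · rw [hvt, side_coe_coe _ _ _ _ hden0 hss0, ← hgnum]
            rcases hts with h | h <;> nlinarith
        rcases edgeCross b r.num (r.den:ℤ) rr ss (Or.inr hdet2) h1 h2 with hx | hy
        · rw [intPt_ratCast] at hx
          exact absurd hx hfreq
        · refine mk _ ?_ hy
          have : intPt rr ss = ((yR:ℝ) : OnePoint ℝ) := by simp [intPt, hss0, hyR]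
          rw [this]
          refine hε₀V _ ?_
          rw [abs_le]
          constructor <;> linarith
      · obtain ⟨rr, ss, hSs, hdet2, heq⟩ := ratNeighbor r 1 (Or.inl rfl) (⌈1/ε₀⌉ + 1)
        have hss : (0:ℤ) < ss := by omega
        have hss0 : ss ≠ 0 := ne_of_gt hss
        have hssR : (1:ℝ)/ε₀ < (ss:ℝ) := by
          calc (1:ℝ)/ε₀ ≤ (⌈1/ε₀⌉:ℝ) := Int.le_ceil _
            _ < (ss:ℝ) := by exact_mod_cast (by omega : ⌈1/ε₀⌉ < ss)
        have hssR0 : (0:ℝ) < (ss:ℝ) := by exact_mod_cast hss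
        set xR : ℝ := (rr:ℝ)/(ss:ℝ) with hxR
        have hgap : xR - ((r:ℚ):ℝ) = -(1/((ss:ℝ)*((r.den:ℤ):ℝ))) := by
          rw [hxR, heq]; push_cast; ring
        have hgappos : 0 < ((r:ℚ):ℝ) - xR := by
          have h9 : ((r:ℚ):ℝ) - xR = 1/((ss:ℝ)*((r.den:ℤ):ℝ)) := by linarith [hgap]
          rw [h9]; positivity
        have hgapeps : ((r:ℚ):ℝ) - xR ≤ ε₀ := by
          have : ((r:ℚ):ℝ) - xR = 1/((ss:ℝ)*((r.den:ℤ):ℝ)) := by linarith [hgap]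
          rw [this]
          have hd1 : (1:ℝ) ≤ ((r.den:ℤ):ℝ) := by exact_mod_cast hden
          have h1s : 1/((ss:ℝ)*((r.den:ℤ):ℝ)) ≤ 1/(ss:ℝ) := by
            apply one_div_le_one_div_of_le hssR0
            nlinarith
          have h2s : 1/(ss:ℝ) < ε₀ := by
            rw [div_lt_iff₀ hssR0]
            rw [div_lt_iff₀ hε₀pos] at hssR
            nlinarith
          linarith
        have hdet3 : rr * (r.den:ℤ) - ss * r.num = 1 ∨ rr * (r.den:ℤ) - ss * r.num = -1 :=
          Or.inr (by linear_combination - hdet2)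
        have h1 : ∃ᶠ n in atTop, Side (intPt rr ss) (intPt r.num (r.den:ℤ)) (cfConv b n) > 0 := by
          refine (hside _ hgappos).mono ?_
          rintro n ⟨t, hvt, ht1, ht2⟩
          rw [hvt, side_coe_coe _ _ _ _ hss0 hden0, ← hgnum]
          have : xR < t := by linarith
          nlinarith
        have h2 : ∃ᶠ n in atTop, Side (intPt rr ss) (intPt r.num (r.den:ℤ)) (cfConv b n) < 0 := by
          refine (deltaSide xR ((r:ℚ):ℝ) (le_of_lt (by linarith)) le_rfl (by linarith)).mono ?_
          rintro n (hn | ⟨t, hvt, hts⟩)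
          · rw [hn, side_coe_infty _ _ _ _ hss0 hden0]; norm_num
          · rw [hvt, side_coe_coe _ _ _ _ hss0 hden0, ← hgnum]
            rcases hts with h | h <;> nlinarith
        rcases edgeCross b rr ss r.num (r.den:ℤ) hdet3 h1 h2 with hx | hy
        · refine mk _ ?_ hx
          have : intPt rr ss = ((xR:ℝ) : OnePoint ℝ) := by simp [intPt, hss0, hxR]
          rw [this]
          refine hε₀V _ ?_
          rw [abs_le]
          constructor <;> linarith
        · rw [intPt_ratCast] at hy
          exact absurd hy hfreq
    · -- irrational case
      obtain ⟨a, c, e, d, hc, hd, hdet, hlg, hrg, hlen⟩ := sternBrocot g hrat hε₀pos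
      have hc0 : c ≠ 0 := ne_of_gt hc
      have hd0 : d ≠ 0 := ne_of_gt hd
      have hxy : (a:ℝ)/c < (e:ℝ)/d := lt_trans hlg hrg
      have hgx : |(a:ℝ)/c - g| ≤ ε₀ := by rw [abs_le]; constructor <;> nlinarith
      have hgy : |(e:ℝ)/d - g| ≤ ε₀ := by rw [abs_le]; constructor <;> nlinarith
      have h1 : ∃ᶠ n in atTop, Side (intPt a c) (intPt e d) (cfConv b n) > 0 := by
        have hU : IsOpen ((fun s : ℝ => ((s:ℝ) : OnePoint ℝ)) '' (Ioo ((a:ℝ)/c) ((e:ℝ)/d))) :=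
          OnePoint.isOpen_image_coe.2 isOpen_Ioo
        have hfr := mapClusterPt_iff_frequently.1 hγ _ (hU.mem_nhds ⟨g, ⟨hlg, hrg⟩, rfl⟩)
        refine hfr.mono ?_
        rintro n ⟨t, ht, hvt⟩
        rw [← hvt, side_coe_coe a c e d hc0 hd0]
        nlinarith [ht.1, ht.2]
      have h2 : ∃ᶠ n in atTop, Side (intPt a c) (intPt e d) (cfConv b n) < 0 := by
        refine (deltaSide ((a:ℝ)/c) ((e:ℝ)/d) (le_of_lt hlg) (le_of_lt hrg)
          (by nlinarith)).mono ?_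
        rintro n (hn | ⟨t, hvt, hts⟩)
        · rw [hn, side_coe_infty a c e d hc0 hd0]; norm_num
        · rw [hvt, side_coe_coe a c e d hc0 hd0]
          rcases hts with h | h <;> nlinarith
      rcases edgeCross b a c e d (Or.inr hdet) h1 h2 with hx | hy
      · refine mk _ ?_ hx
        have : intPt a c = (((a:ℝ)/c : ℝ) : OnePoint ℝ) := by simp [intPt, hc0]
        rw [this]
        exact hε₀V _ hgx
      · refine mk _ ?_ hy
        have : intPt e d = (((e:ℝ)/d : ℝ) : OnePoint ℝ) := by simp [intPt, hd0]
        rw [this]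
        exact hε₀V _ hgy

end Aux

/-- A continued fraction `[b₀, b₁, …]` converges if and only if there are not two distinct
extended rationals that each appear infinitely often among its convergents. -/
theorem stmt6 (b : ℕ → ℤ) :
    (∃ L : OnePoint ℝ, Filter.Tendsto (cfConv b) Filter.atTop (nhds L)) ↔
      ¬ ∃ u w : OnePoint ℝ, IsExtRat u ∧ IsExtRat w ∧ u ≠ w ∧
        {n : ℕ | cfConv b n = u}.Infinite ∧ {n : ℕ | cfConv b n = w}.Infinite := by
  constructor
  · rintro ⟨L, hL⟩ ⟨u, w, hu, hw, huw, hiu, hiw⟩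
    have hfu : ∃ᶠ n in atTop, cfConv b n = u := Nat.frequently_atTop_iff_infinite.2 hiu
    have hfw : ∃ᶠ n in atTop, cfConv b n = w := Nat.frequently_atTop_iff_infinite.2 hiw
    have h1 : L = u := tendsto_nhds_unique_of_frequently_eq hL tendsto_const_nhds hfu
    have h2 : L = w := tendsto_nhds_unique_of_frequently_eq hL tendsto_const_nhds hfw
    exact huw (h1 ▸ h2 ▸ rfl)
  · intro hno
    by_contra hL
    obtain ⟨α, β, hab, hα, hβ⟩ := exists_two_clusterPts hL
    obtain ⟨U, W, hU, hW, hαU, hβW, hUW⟩ := t2_separation hab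
    obtain ⟨u, huU, hur, hui⟩ := halfBarrier b α β hα hβ hab U hU hαU
    obtain ⟨w, hwW, hwr, hwi⟩ := halfBarrier b β α hβ hα hab.symm W hW hβW
    refine hno ⟨u, w, hur, hwr, ?_, hui, hwi⟩
    intro h
    exact Set.disjoint_left.1 hUW huU (h ▸ hwW)
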